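/- The unique k-algebra homomorphism from the free associative unital k-algebra on θ generators x_1, …, x_θ to 𝒰(q) sending x_i to E_i is injective. (Equivalently, the subalgebra U⁺(q) of 𝒰(q) generated by the E_i is free on the E_i, i.e. isomorphic to the tensor algebra T(V) of a θ-dimensional vector space.) -/

import Mathlib

/-- The generators `E_i, F_i, K_i, K_i⁻, L_i, L_i⁻` of the Drinfeld double `𝒰(q)`. -/
inductive UGen (θ : ℕ) : Type
  | E : Fin θ → UGen θ
  | F : Fin θ → UGen θ
  | K : Fin θ → UGen θ
  | Kinv : Fin θ → UGen θ
  | L : Fin θ → UGen θ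
  | Linv : Fin θ → UGen θ

/-- The toral generators, i.e. those among `K_i, K_i⁻, L_i, L_i⁻`. -/
def UGen.IsToral {θ : ℕ} : UGen θ → Prop
  | .E _ => False
  | .F _ => False
  | _ => True

variable (k : Type*) [Field k] {θ : ℕ}

/-- The image of a generator in the free algebra. -/
noncomputable def Ugen (g : UGen θ) : FreeAlgebra k (UGen θ) := FreeAlgebra.ι k g

/-- The defining relations of the algebra `𝒰(q)`. -/
inductive URel (q : Fin θ → Fin θ → kˣ) :
    FreeAlgebra k (UGen θ) → FreeAlgebra k (UGen θ) → Prop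
  | toral_comm (X Y : UGen θ) (hX : X.IsToral) (hY : Y.IsToral) :
      URel q (Ugen k X * Ugen k Y) (Ugen k Y * Ugen k X)
  | K_Kinv (i : Fin θ) : URel q (Ugen k (.K i) * Ugen k (.Kinv i)) 1
  | Kinv_K (i : Fin θ) : URel q (Ugen k (.Kinv i) * Ugen k (.K i)) 1
  | L_Linv (i : Fin θ) : URel q (Ugen k (.L i) * Ugen k (.Linv i)) 1
  | Linv_L (i : Fin θ) : URel q (Ugen k (.Linv i) * Ugen k (.L i)) 1
  | K_E (i j : Fin θ) : URel q (Ugen k (.K i) * Ugen k (.E j))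
      ((q i j : k) • (Ugen k (.E j) * Ugen k (.K i)))
  | L_E (i j : Fin θ) : URel q (Ugen k (.L i) * Ugen k (.E j))
      ((q j i : k)⁻¹ • (Ugen k (.E j) * Ugen k (.L i)))
  | K_F (i j : Fin θ) : URel q (Ugen k (.K i) * Ugen k (.F j))
      ((q i j : k)⁻¹ • (Ugen k (.F j) * Ugen k (.K i)))
  | L_F (i j : Fin θ) : URel q (Ugen k (.L i) * Ugen k (.F j))
      ((q j i : k) • (Ugen k (.F j) * Ugen k (.L i)))
  | E_F (i j : Fin θ) : URel q (Ugen k (.E i) * Ugen k (.F j) - Ugen k (.F j) * Ugen k (.E i))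
      (if i = j then Ugen k (.K i) - Ugen k (.L i) else 0)

/-- The algebra `𝒰(q)`: the quotient of the free algebra on the generators
`E_i, F_i, K_i, K_i⁻, L_i, L_i⁻` by the defining relations. -/
noncomputable abbrev UqAlgebra (q : Fin θ → Fin θ → kˣ) := RingQuot (URel k q)

variable (q : Fin θ → Fin θ → kˣ)

/-- The generator `E_i` of `𝒰(q)`. -/
noncomputable def UE (i : Fin θ) : UqAlgebra k q := RingQuot.mkAlgHom k (URel k q) (Ugen k (.E i))
/-- The generator `F_i` of `𝒰(q)`. -/
noncomputable def UF (i : Fin θ) : UqAlgebra k q := RingQuot.mkAlgHom k (URel k q) (Ugen k (.F i))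
/-- The generator `K_i` of `𝒰(q)`. -/
noncomputable def UK (i : Fin θ) : UqAlgebra k q := RingQuot.mkAlgHom k (URel k q) (Ugen k (.K i))
/-- The generator `K_i⁻` of `𝒰(q)`. -/
noncomputable def UKinv (i : Fin θ) : UqAlgebra k q :=
  RingQuot.mkAlgHom k (URel k q) (Ugen k (.Kinv i))
/-- The generator `L_i` of `𝒰(q)`. -/
noncomputable def UL (i : Fin θ) : UqAlgebra k q := RingQuot.mkAlgHom k (URel k q) (Ugen k (.L i))
/-- The generator `L_i⁻` of `𝒰(q)`. -/
noncomputable def ULinv (i : Fin θ) : UqAlgebra k q :=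
  RingQuot.mkAlgHom k (URel k q) (Ugen k (.Linv i))


namespace UqFree

noncomputable def mono : List (Fin θ) → FreeAlgebra k (Fin θ)
  | [] => 1
  | i :: w => FreeAlgebra.ι k i * mono w

lemma basis_eq_lift (w : FreeMonoid (Fin θ)) :
    FreeAlgebra.basisFreeMonoid k (Fin θ) w = FreeMonoid.lift (FreeAlgebra.ι k) w := by
  simp [FreeAlgebra.basisFreeMonoid, FreeAlgebra.equivMonoidAlgebraFreeMonoid, Module.Basis.map_apply]

lemma basis_eq_mono (w : List (Fin θ)) :
    FreeAlgebra.basisFreeMonoid k (Fin θ) (FreeMonoid.ofList w) = mono k w := by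
  induction w with
  | nil =>
    simp [basis_eq_lift, mono]
  | cons i w ih =>
    rw [basis_eq_lift] at ih ⊢
    rw [FreeMonoid.ofList_cons, map_mul, FreeMonoid.lift_eval_of, ih]
    rfl

lemma basis_eq_mono' (w : FreeMonoid (Fin θ)) :
    FreeAlgebra.basisFreeMonoid k (Fin θ) w = mono k (FreeMonoid.toList w) := by
  conv_lhs => rw [← FreeMonoid.ofList_toList w]
  exact basis_eq_mono k _

noncomputable def dAlg (s : Fin θ → k) : FreeAlgebra k (Fin θ) →ₐ[k] FreeAlgebra k (Fin θ) :=
  FreeAlgebra.lift k (fun j => s j • FreeAlgebra.ι k j)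

@[simp] lemma dAlg_ι (s : Fin θ → k) (j : Fin θ) :
    dAlg k s (FreeAlgebra.ι k j) = s j • FreeAlgebra.ι k j := by
  simp [dAlg]

lemma dAlg_comp (s t : Fin θ → k) : (dAlg k s).comp (dAlg k t) = dAlg k (s * t) := by
  apply FreeAlgebra.hom_ext; funext j
  simp [mul_smul, smul_comm (t j) (s j)]

lemma dAlg_one : dAlg k (1 : Fin θ → k) = AlgHom.id k (FreeAlgebra k (Fin θ)) := by
  apply FreeAlgebra.hom_ext; funext j; simp

lemma dAlg_mono (s : Fin θ → k) (w : List (Fin θ)) :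
    dAlg k s (mono k w) = (w.map s).prod • mono k w := by
  induction w with
  | nil => simp [mono]
  | cons i w ih =>
    rw [mono, map_mul, dAlg_ι, ih, List.map_cons, List.prod_cons, smul_mul_assoc,
      mul_smul_comm, smul_smul]

variable (q : Fin θ → Fin θ → kˣ)

/-- diagonal scalars of toral generators -/
noncomputable def sgen : UGen θ → Fin θ → k
  | .K i => fun j => q i j
  | .Kinv i => fun j => ((q i j)⁻¹ : kˣ)
  | .L i => fun j => ((q j i)⁻¹ : kˣ)
  | .Linv i => fun j => q j i
  | _ => 1

/-- value of the skew-derivation `F_j` on a monomial -/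
noncomputable def fval (j : Fin θ) : List (Fin θ) → FreeAlgebra k (Fin θ)
  | [] => 0
  | i :: w => (if i = j then dAlg k (sgen k q (.L j)) (mono k w)
      - dAlg k (sgen k q (.K j)) (mono k w) else 0) + FreeAlgebra.ι k i * fval j w

noncomputable def Fop (j : Fin θ) :
    Module.End k (FreeAlgebra k (Fin θ)) :=
  (FreeAlgebra.basisFreeMonoid k (Fin θ)).constr k (fun w => fval k q j (FreeMonoid.toList w))

lemma Fop_mono (j : Fin θ) (w : List (Fin θ)) :
    Fop k q j (mono k w) = fval k q j w := by
  rw [← basis_eq_mono, Fop, Module.Basis.constr_basis]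
  rfl

/-- operators attached to each generator -/
noncomputable def op : UGen θ → Module.End k (FreeAlgebra k (Fin θ))
  | .E i => LinearMap.mulLeft k (FreeAlgebra.ι k i)
  | .F i => Fop k q i
  | .K i => (dAlg k (sgen k q (.K i))).toLinearMap
  | .Kinv i => (dAlg k (sgen k q (.Kinv i))).toLinearMap
  | .L i => (dAlg k (sgen k q (.L i))).toLinearMap
  | .Linv i => (dAlg k (sgen k q (.Linv i))).toLinearMap

lemma op_toral {X : UGen θ} (hX : X.IsToral) :
    op k q X = (dAlg k (sgen k q X)).toLinearMap := by
  cases X <;> first | rfl | exact absurd hX (by simp [UGen.IsToral])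

/-- key commutation for diag with fval -/
lemma dAlg_fval (s : Fin θ → k) (j : Fin θ) (w : List (Fin θ)) :
    s j • dAlg k s (fval k q j w) = (w.map s).prod • fval k q j w := by
  induction w with
  | nil => simp [fval]
  | cons i w ih =>
    rw [fval, map_add, map_mul, dAlg_ι]
    rw [List.map_cons, List.prod_cons]
    have hT : s j • dAlg k s (if i = j then dAlg k (sgen k q (.L j)) (mono k w)
        - dAlg k (sgen k q (.K j)) (mono k w) else 0)
        = (s i * (w.map s).prod) • (if i = j then dAlg k (sgen k q (.L j)) (mono k w)
        - dAlg k (sgen k q (.K j)) (mono k w) else 0) := by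
      by_cases h : i = j
      · subst h
        rw [if_pos rfl, map_sub, dAlg_mono k (sgen k q (.L i)), dAlg_mono k (sgen k q (.K i)),
          map_smul, map_smul]
        simp only [smul_sub, smul_smul]
        rw [dAlg_mono]
        simp only [smul_smul]
        module
      · simp [h]
    rw [smul_add, hT, smul_add]
    congr 1
    rw [smul_mul_assoc, smul_comm (s j) (s i), ← mul_smul_comm, ih, mul_smul_comm, smul_smul]


@[simp] lemma sgen_K (i j : Fin θ) : sgen k q (.K i) j = (q i j : k) := rfl
@[simp] lemma sgen_Kinv (i j : Fin θ) : sgen k q (.Kinv i) j = ((q i j)⁻¹ : kˣ) := rfl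
@[simp] lemma sgen_L (i j : Fin θ) : sgen k q (.L i) j = ((q j i)⁻¹ : kˣ) := rfl
@[simp] lemma sgen_Linv (i j : Fin θ) : sgen k q (.Linv i) j = (q j i : k) := rfl

lemma op_E (i : Fin θ) : op k q (.E i) = LinearMap.mulLeft k (FreeAlgebra.ι k i) := rfl
lemma op_F (i : Fin θ) : op k q (.F i) = Fop k q i := rfl

lemma dAlg_lin_mul (s t : Fin θ → k) :
    (dAlg k s).toLinearMap * (dAlg k t).toLinearMap = (dAlg k (s * t)).toLinearMap := by
  rw [Module.End.mul_eq_comp, ← AlgHom.comp_toLinearMap, dAlg_comp]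

lemma rel_pres ⦃x y : FreeAlgebra k (UGen θ)⦄ (h : URel k q x y) :
    FreeAlgebra.lift k (op k q) x = FreeAlgebra.lift k (op k q) y := by
  have ΦU : ∀ X : UGen θ, FreeAlgebra.lift k (op k q) (Ugen k X) = op k q X := fun X =>
    FreeAlgebra.lift_ι_apply _ _
  induction h with
  | toral_comm X Y hX hY =>
      rw [map_mul, map_mul, ΦU, ΦU, op_toral k q hX, op_toral k q hY, dAlg_lin_mul, dAlg_lin_mul,
        mul_comm (sgen k q X)]
  | K_Kinv i =>
      rw [map_mul, ΦU, ΦU, map_one, op_toral k q (X := .K i) trivial,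
        op_toral k q (X := .Kinv i) trivial, dAlg_lin_mul,
        show sgen k q (.K i) * sgen k q (.Kinv i) = 1 from funext fun j => by
          simp [Units.val_inv_eq_inv_val, mul_inv_cancel₀ (Units.ne_zero (q i j))],
        dAlg_one]
      rfl
  | Kinv_K i =>
      rw [map_mul, ΦU, ΦU, map_one, op_toral k q (X := .K i) trivial,
        op_toral k q (X := .Kinv i) trivial, dAlg_lin_mul,
        show sgen k q (.Kinv i) * sgen k q (.K i) = 1 from funext fun j => by
          simp [Units.val_inv_eq_inv_val, inv_mul_cancel₀ (Units.ne_zero (q i j))],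
        dAlg_one]
      rfl
  | L_Linv i =>
      rw [map_mul, ΦU, ΦU, map_one, op_toral k q (X := .L i) trivial,
        op_toral k q (X := .Linv i) trivial, dAlg_lin_mul,
        show sgen k q (.L i) * sgen k q (.Linv i) = 1 from funext fun j => by
          simp [Units.val_inv_eq_inv_val, inv_mul_cancel₀ (Units.ne_zero (q j i))],
        dAlg_one]
      rfl
  | Linv_L i =>
      rw [map_mul, ΦU, ΦU, map_one, op_toral k q (X := .L i) trivial,
        op_toral k q (X := .Linv i) trivial, dAlg_lin_mul,
        show sgen k q (.Linv i) * sgen k q (.L i) = 1 from funext fun j => by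
          simp [Units.val_inv_eq_inv_val, mul_inv_cancel₀ (Units.ne_zero (q j i))],
        dAlg_one]
      rfl
  | K_E i j =>
      rw [map_mul, map_smul, map_mul, ΦU, ΦU, op_toral k q (X := .K i) trivial]
      refine LinearMap.ext fun v => ?_
      simp only [Module.End.mul_apply, LinearMap.smul_apply, AlgHom.toLinearMap_apply, op_E,
        LinearMap.mulLeft_apply, map_mul, dAlg_ι, sgen_K, smul_mul_assoc]
  | L_E i j =>
      rw [map_mul, map_smul, map_mul, ΦU, ΦU, op_toral k q (X := .L i) trivial]
      refine LinearMap.ext fun v => ?_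
      simp only [Module.End.mul_apply, LinearMap.smul_apply, AlgHom.toLinearMap_apply, op_E,
        LinearMap.mulLeft_apply, map_mul, dAlg_ι, sgen_L, smul_mul_assoc,
        Units.val_inv_eq_inv_val]
  | K_F i j =>
      rw [map_mul, map_smul, map_mul, ΦU, ΦU, op_toral k q (X := .K i) trivial]
      apply (FreeAlgebra.basisFreeMonoid k (Fin θ)).ext
      intro w
      rw [basis_eq_mono']
      simp only [Module.End.mul_apply, LinearMap.smul_apply, AlgHom.toLinearMap_apply, op_F]
      rw [Fop_mono, dAlg_mono, map_smul, Fop_mono,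
        ← dAlg_fval k q (sgen k q (.K i)) j, smul_smul, sgen_K,
        inv_mul_cancel₀ (Units.ne_zero (q i j)), one_smul]
  | L_F i j =>
      rw [map_mul, map_smul, map_mul, ΦU, ΦU, op_toral k q (X := .L i) trivial]
      apply (FreeAlgebra.basisFreeMonoid k (Fin θ)).ext
      intro w
      rw [basis_eq_mono']
      simp only [Module.End.mul_apply, LinearMap.smul_apply, AlgHom.toLinearMap_apply, op_F]
      rw [Fop_mono, dAlg_mono, map_smul, Fop_mono,
        ← dAlg_fval k q (sgen k q (.L i)) j, smul_smul, sgen_L,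
        Units.val_inv_eq_inv_val, mul_inv_cancel₀ (Units.ne_zero (q j i)), one_smul]
  | E_F i j =>
      rw [map_sub, map_mul, map_mul, ΦU, ΦU]
      by_cases hij : i = j
      · subst hij
        rw [if_pos rfl, map_sub, ΦU, ΦU, op_toral k q (X := .K i) trivial,
          op_toral k q (X := .L i) trivial]
        apply (FreeAlgebra.basisFreeMonoid k (Fin θ)).ext
        intro w
        rw [basis_eq_mono']
        simp only [LinearMap.sub_apply, Module.End.mul_apply, AlgHom.toLinearMap_apply, op_E,
          op_F, LinearMap.mulLeft_apply]
        rw [show FreeAlgebra.ι k i * mono k (FreeMonoid.toList w)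
            = mono k (i :: FreeMonoid.toList w) from rfl, Fop_mono, Fop_mono]
        simp only [fval, if_pos rfl, LinearMap.mulLeft_apply, if_true]
        abel
      · rw [if_neg hij, map_zero]
        apply (FreeAlgebra.basisFreeMonoid k (Fin θ)).ext
        intro w
        rw [basis_eq_mono']
        simp only [LinearMap.sub_apply, Module.End.mul_apply, AlgHom.toLinearMap_apply, op_E,
          op_F, LinearMap.mulLeft_apply, LinearMap.zero_apply]
        rw [show FreeAlgebra.ι k i * mono k (FreeMonoid.toList w)
            = mono k (i :: FreeMonoid.toList w) from rfl, Fop_mono, Fop_mono]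
        simp only [fval, if_neg hij]
        abel


end UqFree

/-- The canonical algebra homomorphism from the free algebra on `θ` generators to `𝒰(q)`
sending `x_i` to `E_i` is injective; i.e. the subalgebra `U⁺(q)` is freely generated by
the `E_i`. -/
theorem UqAlgebra_E_free :
    Function.Injective
      (FreeAlgebra.lift k (fun i : Fin θ => UE k q i) :
        FreeAlgebra k (Fin θ) →ₐ[k] UqAlgebra k q) := by
  classical
  intro a b h
  let Phi : FreeAlgebra k (UGen θ) →ₐ[k] Module.End k (FreeAlgebra k (Fin θ)) :=
    FreeAlgebra.lift k (UqFree.op k q)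
  let ψ : UqAlgebra k q →ₐ[k] Module.End k (FreeAlgebra k (Fin θ)) :=
    RingQuot.liftAlgHom k ⟨Phi, UqFree.rel_pres k q⟩
  have hcomp : ψ.comp (FreeAlgebra.lift k (fun i : Fin θ => UE k q i))
      = Algebra.lmul k (FreeAlgebra k (Fin θ)) := by
    apply FreeAlgebra.hom_ext
    funext i
    show ψ (FreeAlgebra.lift k (fun i : Fin θ => UE k q i) (FreeAlgebra.ι k i))
        = Algebra.lmul k (FreeAlgebra k (Fin θ)) (FreeAlgebra.ι k i)
    rw [FreeAlgebra.lift_ι_apply, UE]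
    rw [show ψ (RingQuot.mkAlgHom k (URel k q) (Ugen k (.E i))) = Phi (Ugen k (.E i)) from
      RingQuot.liftAlgHom_mkAlgHom_apply _ _ _ _]
    rw [show Phi (Ugen k (.E i)) = UqFree.op k q (.E i) from FreeAlgebra.lift_ι_apply _ _]
    refine LinearMap.ext fun v => ?_
    rw [UqFree.op_E, LinearMap.mulLeft_apply]
    rfl
  have key : ∀ a : FreeAlgebra k (Fin θ),
      ψ ((FreeAlgebra.lift k (fun i : Fin θ => UE k q i)) a) (1 : FreeAlgebra k (Fin θ)) = a := by
    intro a
    have := congrFun (congrArg (fun f => (DFunLike.coe f : FreeAlgebra k (Fin θ) → _)) hcomp) a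
    simp only [AlgHom.coe_comp, Function.comp_apply] at this
    rw [this, show ((Algebra.lmul k (FreeAlgebra k (Fin θ))) a) (1 : FreeAlgebra k (Fin θ))
        = a * 1 from rfl, mul_one]
  have h1 := congrArg (fun x => ψ x (1 : FreeAlgebra k (Fin θ))) h
  simpa only [key] using h1
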